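/- Let f be C² on B = [α−δ, α+δ] with f(α) = 0, f'(α) ≠ 0, and f''(α) ≠ 0. If x_0 ≠ x_1 are chosen sufficiently close to α (and no iterate equals α), then the secant iterates x_{n+1} = x_n − f(x_n)(x_n − x_{n−1})/(f(x_n) − f(x_{n−1})) are well-defined, remain close to α, and converge to α; moreover with E_n = |x_n − α|, one has lim_{n→∞} E_{n+1}/E_n^{r₀} = m_α^{r₀−1}, where r₀ = (1+√5)/2 and m_α = |f''(α)/(2f'(α))|. -/

import Mathlib

open Filter Topology Set

private lemma contraction_tendsto (u a : ℕ → ℝ) (r : ℝ) (hr : |r| < 1)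
    (ha : Tendsto a atTop (𝓝 0)) (hrec : ∀ n, u (n + 1) = a n - r * u n) :
    Tendsto u atTop (𝓝 0) := by
  rw [Metric.tendsto_atTop]
  intro ε hε
  have hr0 : (0:ℝ) ≤ |r| := abs_nonneg r
  have h1r : (0:ℝ) < 1 - |r| := by linarith
  obtain ⟨N, hN⟩ := Metric.tendsto_atTop.mp ha (ε / 2 * (1 - |r|)) (by positivity)
  have key : ∀ k, |u (N + k)| ≤ |r| ^ k * |u N| + ε / 2 := by
    intro k
    induction k with
    | zero => simp; linarith [abs_nonneg (u N)]
    | succ k ih =>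
      have haN : |a (N + k)| ≤ ε / 2 * (1 - |r|) := by
        have := hN (N + k) (Nat.le_add_right _ _)
        rw [Real.dist_eq, sub_zero] at this
        exact this.le
      have h1 : |u (N + (k + 1))| ≤ |a (N + k)| + |r| * |u (N + k)| := by
        have : N + (k + 1) = (N + k) + 1 := by ring
        rw [this, hrec (N + k)]
        calc |a (N + k) - r * u (N + k)| ≤ |a (N + k)| + |r * u (N + k)| :=
              abs_sub _ _
          _ = |a (N + k)| + |r| * |u (N + k)| := by rw [abs_mul]
      have h2 : |r| * |u (N + k)| ≤ |r| * (|r| ^ k * |u N| + ε / 2) :=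
        mul_le_mul_of_nonneg_left ih hr0
      have : |r| ^ (k + 1) = |r| * |r| ^ k := by ring
      rw [this]
      nlinarith [abs_nonneg (u (N + k))]
  have hpow : Tendsto (fun k => |r| ^ k * |u N|) atTop (𝓝 0) := by
    simpa using (tendsto_pow_atTop_nhds_zero_of_lt_one hr0 hr).mul_const |u N|
  obtain ⟨K, hK⟩ := Metric.tendsto_atTop.mp hpow (ε / 2) (by positivity)
  refine ⟨N + K, fun n hn => ?_⟩
  obtain ⟨k, rfl⟩ := Nat.exists_eq_add_of_le hn
  have hKk := hK (K + k) (Nat.le_add_right _ _)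
  rw [Real.dist_eq, sub_zero] at hKk ⊢
  have hh := key (K + k)
  have : |r| ^ (K + k) * |u N| < ε / 2 := lt_of_abs_lt hKk
  have : |u (N + (K + k))| < ε := by linarith
  simpa [Nat.add_assoc] using this

private lemma dd_core (f f' f'' : ℝ → ℝ) (a b c : ℝ) (hab : a < b) (hbc : b < c)
    (h1 : ∀ t ∈ Set.Icc a c, HasDerivAt f (f' t) t)
    (h2 : ∀ t ∈ Set.Icc a c, HasDerivAt f' (f'' t) t) :
    ∃ η ∈ Set.Ioo a c, f'' η =
      2 * (f a / ((a - b) * (a - c)) + f b / ((b - a) * (b - c)) + f c / ((c - a) * (c - b))) := by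
  have hac : a < c := hab.trans hbc
  have hba : b - a ≠ 0 := sub_ne_zero.mpr hab.ne'
  have hca : c - a ≠ 0 := sub_ne_zero.mpr hac.ne'
  have hcb : c - b ≠ 0 := sub_ne_zero.mpr hbc.ne'
  have hab' : a - b ≠ 0 := sub_ne_zero.mpr hab.ne
  have hac' : a - c ≠ 0 := sub_ne_zero.mpr hac.ne
  have hbc' : b - c ≠ 0 := sub_ne_zero.mpr hbc.ne
  set D : ℝ := f a / ((a - b) * (a - c)) + f b / ((b - a) * (b - c)) + f c / ((c - a) * (c - b))
    with hD
  set S : ℝ := (f b - f a) / (b - a) with hS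
  set g : ℝ → ℝ := fun t => f t - f a - S * (t - a) - D * ((t - a) * (t - b)) with hg
  set g' : ℝ → ℝ := fun t => f' t - S - D * ((t - b) + (t - a)) with hg'
  have hgd : ∀ t ∈ Set.Icc a c, HasDerivAt g (g' t) t := by
    intro t ht
    have hpoly : HasDerivAt (fun t => (t - a) * (t - b)) ((t - b) + (t - a)) t := by
      have := (((hasDerivAt_id t).sub_const a).mul ((hasDerivAt_id t).sub_const b))
      exact this.congr_deriv (by simp only [id_eq]; ring)
    have := (((h1 t ht).sub_const (f a)).sub
      (((hasDerivAt_id t).sub_const a).const_mul S)).sub (hpoly.const_mul D)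
    exact this.congr_deriv (by ring)
  have hga : g a = 0 := by
    show f a - f a - S * (a - a) - D * ((a - a) * (a - b)) = 0
    ring
  have hgb : g b = 0 := by
    have h : S * (b - a) = f b - f a := by rw [hS]; field_simp
    show f b - f a - S * (b - a) - D * ((b - a) * (b - b)) = 0
    rw [h]; ring
  have hgc : g c = 0 := by
    show f c - f a - S * (c - a) - D * ((c - a) * (c - b)) = 0
    rw [hS, hD]
    field_simp
    ring
  -- Rolle on [a,b]
  obtain ⟨z1, hz1, hgz1⟩ := exists_hasDerivAt_eq_zero hab
    (fun t ht => (hgd t ⟨ht.1, ht.2.trans hbc.le⟩).continuousAt.continuousWithinAt)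
    (hga.trans hgb.symm)
    (fun t ht => hgd t ⟨ht.1.le, ht.2.le.trans hbc.le⟩)
  obtain ⟨z2, hz2, hgz2⟩ := exists_hasDerivAt_eq_zero hbc
    (fun t ht => (hgd t ⟨hab.le.trans ht.1, ht.2⟩).continuousAt.continuousWithinAt)
    (hgb.trans hgc.symm)
    (fun t ht => hgd t ⟨(hab.trans ht.1).le, ht.2.le⟩)
  have hz12 : z1 < z2 := hz1.2.trans hz2.1
  have hIcc : Set.Icc z1 z2 ⊆ Set.Icc a c := fun t ht =>
    ⟨hz1.1.le.trans ht.1, ht.2.trans (hz2.2.le)⟩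
  have hgd2 : ∀ t ∈ Set.Icc z1 z2, HasDerivAt g' (f'' t - 2 * D) t := by
    intro t ht
    have h2t := h2 t (hIcc ht)
    have hlin : HasDerivAt (fun t : ℝ => D * ((t - b) + (t - a))) (D * 2) t := by
      have := (((hasDerivAt_id t).sub_const b).add ((hasDerivAt_id t).sub_const a)).const_mul D
      exact this.congr_deriv (by ring)
    have := (h2t.sub_const S).sub hlin
    exact this.congr_deriv (by ring)
  obtain ⟨η, hη, hfη⟩ := exists_hasDerivAt_eq_zero hz12
    (fun t ht => (hgd2 t ht).continuousAt.continuousWithinAt)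
    (hgz1.trans hgz2.symm)
    (fun t ht => hgd2 t ⟨ht.1.le, ht.2.le⟩)
  refine ⟨η, ⟨hz1.1.trans hη.1, hη.2.trans hz2.2⟩, by linarith [hfη]⟩

private lemma dd_sym (f f' f'' : ℝ → ℝ) (p q r lo hi : ℝ)
    (hpq : p ≠ q) (hpr : p ≠ r) (hqr : q ≠ r)
    (hp : p ∈ Set.Icc lo hi) (hq : q ∈ Set.Icc lo hi) (hr : r ∈ Set.Icc lo hi)
    (h1 : ∀ t ∈ Set.Icc lo hi, HasDerivAt f (f' t) t)
    (h2 : ∀ t ∈ Set.Icc lo hi, HasDerivAt f' (f'' t) t) :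
    ∃ η ∈ Set.Icc lo hi, f'' η =
      2 * (f p / ((p - q) * (p - r)) + f q / ((q - p) * (q - r)) + f r / ((r - p) * (r - q))) := by
  have core : ∀ a b c : ℝ, a < b → b < c → a ∈ Set.Icc lo hi → c ∈ Set.Icc lo hi →
      ∃ η ∈ Set.Icc lo hi, f'' η =
        2 * (f a / ((a - b) * (a - c)) + f b / ((b - a) * (b - c)) + f c / ((c - a) * (c - b))) := by
    intro a b c hab hbc ha hc
    obtain ⟨η, hη, hfη⟩ := dd_core f f' f'' a b c hab hbc
      (fun t ht => h1 t ⟨ha.1.trans ht.1, ht.2.trans hc.2⟩)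
      (fun t ht => h2 t ⟨ha.1.trans ht.1, ht.2.trans hc.2⟩)
    exact ⟨η, ⟨ha.1.trans hη.1.le, hη.2.le.trans hc.2⟩, hfη⟩
  rcases hpq.lt_or_gt with h1' | h1' <;> rcases hpr.lt_or_gt with h2' | h2' <;>
    rcases hqr.lt_or_gt with h3' | h3'
  · obtain ⟨η, hη, e⟩ := core p q r h1' h3' hp hr; exact ⟨η, hη, by linear_combination e⟩
  · obtain ⟨η, hη, e⟩ := core p r q h2' h3' hp hq; exact ⟨η, hη, by linear_combination e⟩
  · linarith
  · obtain ⟨η, hη, e⟩ := core r p q h2' h1' hr hq; exact ⟨η, hη, by linear_combination e⟩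
  · obtain ⟨η, hη, e⟩ := core q p r h1' h2' hq hr; exact ⟨η, hη, by linear_combination e⟩
  · linarith
  · obtain ⟨η, hη, e⟩ := core q r p h3' h2' hq hp; exact ⟨η, hη, by linear_combination e⟩
  · obtain ⟨η, hη, e⟩ := core r q p h3' h1' hr hp; exact ⟨η, hη, by linear_combination e⟩

private lemma mvt_sym (f f' : ℝ → ℝ) (p q lo hi : ℝ) (hpq : p ≠ q)
    (hp : p ∈ Set.Icc lo hi) (hq : q ∈ Set.Icc lo hi)
    (h1 : ∀ t ∈ Set.Icc lo hi, HasDerivAt f (f' t) t) :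
    ∃ ξ ∈ Set.Icc lo hi, f p - f q = f' ξ * (p - q) := by
  rcases hpq.lt_or_gt with h | h
  · have hsub : Set.Icc p q ⊆ Set.Icc lo hi := fun t ht => ⟨hp.1.trans ht.1, ht.2.trans hq.2⟩
    obtain ⟨ξ, hξ, e⟩ := exists_hasDerivAt_eq_slope f f' h
      (fun t ht => (h1 t (hsub ht)).continuousAt.continuousWithinAt)
      (fun t ht => h1 t (hsub ⟨ht.1.le, ht.2.le⟩))
    refine ⟨ξ, ⟨hp.1.trans hξ.1.le, hξ.2.le.trans hq.2⟩, ?_⟩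
    have hne : q - p ≠ 0 := sub_ne_zero.mpr h.ne'
    rw [e]
    field_simp
    try ring
  · have hsub : Set.Icc q p ⊆ Set.Icc lo hi := fun t ht => ⟨hq.1.trans ht.1, ht.2.trans hp.2⟩
    obtain ⟨ξ, hξ, e⟩ := exists_hasDerivAt_eq_slope f f' h
      (fun t ht => (h1 t (hsub ht)).continuousAt.continuousWithinAt)
      (fun t ht => h1 t (hsub ⟨ht.1.le, ht.2.le⟩))
    refine ⟨ξ, ⟨hq.1.trans hξ.1.le, hξ.2.le.trans hp.2⟩, ?_⟩
    have hne : p - q ≠ 0 := sub_ne_zero.mpr h.ne'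
    rw [e]
    field_simp
    try ring

set_option maxHeartbeats 2000000 in
theorem secant_convergence_simple_root (f : ℝ → ℝ) (α δ : ℝ) (hδ : 0 < δ)
    (hf : ContDiffOn ℝ 2 f (Set.Icc (α - δ) (α + δ)))
    (hroot : f α = 0) (hd1 : deriv f α ≠ 0) (hd2 : iteratedDeriv 2 f α ≠ 0) :
    ∃ ε > 0, ∀ x : ℕ → ℝ,
      |x 0 - α| < ε → |x 1 - α| < ε → x 0 ≠ x 1 →
      (∀ n, x n ≠ α) →
      (∀ n, x (n + 2) =
        x (n + 1) - f (x (n + 1)) * (x (n + 1) - x n) / (f (x (n + 1)) - f (x n))) →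
      (∀ n, f (x (n + 1)) ≠ f (x n)) ∧
      (∀ n, |x n - α| < ε) ∧
      Tendsto x atTop (𝓝 α) ∧
      Tendsto (fun n => |x (n + 1) - α| / |x n - α| ^ ((1 + Real.sqrt 5) / 2))
        atTop (𝓝 (|iteratedDeriv 2 f α / (2 * deriv f α)| ^ ((1 + Real.sqrt 5) / 2 - 1))) := by
  have hs5 : Real.sqrt 5 ^ 2 = 5 := Real.sq_sqrt (by norm_num)
  have hs5lb : 1 < Real.sqrt 5 := by nlinarith [Real.sqrt_nonneg 5]
  have hs5ub : Real.sqrt 5 < 3 := by nlinarith [Real.sqrt_nonneg 5]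
  set φ : ℝ := (1 + Real.sqrt 5) / 2 with hφdef
  have hφ2 : φ * φ = φ + 1 := by rw [hφdef]; field_simp; nlinarith [hs5]
  have hr1 : |φ - 1| < 1 := by
    rw [abs_lt]; constructor <;> rw [hφdef] <;> [linarith; linarith]
  -- derivatives
  set f1 : ℝ → ℝ := deriv f with hf1def
  set f2 : ℝ → ℝ := deriv (deriv f) with hf2def
  have hI2 : iteratedDeriv 2 f = f2 := by
    rw [show (2 : ℕ) = 1 + 1 from rfl, iteratedDeriv_succ, iteratedDeriv_one]
  set U : Set ℝ := Set.Ioo (α - δ) (α + δ) with hUdef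
  have hU : IsOpen U := isOpen_Ioo
  have hfU : ContDiffOn ℝ 2 f U := hf.mono Set.Ioo_subset_Icc_self
  have hαU : α ∈ U := by constructor <;> simp <;> linarith
  have hdf : ∀ t ∈ U, HasDerivAt f (f1 t) t := fun t ht =>
    ((hfU.differentiableOn (by norm_num)).differentiableAt (hU.mem_nhds ht)).hasDerivAt
  have hf1U : ContDiffOn ℝ 1 f1 U := hfU.deriv_of_isOpen hU (by norm_num)
  have hdf1 : ∀ t ∈ U, HasDerivAt f1 (f2 t) t := fun t ht =>
    ((hf1U.differentiableOn (by norm_num)).differentiableAt (hU.mem_nhds ht)).hasDerivAt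
  have hf2c : ContinuousOn f2 U := hf1U.continuousOn_deriv_of_isOpen hU (le_refl _)
  have hf1ca : ContinuousAt f1 α := (hf1U.continuousOn).continuousAt (hU.mem_nhds hαU)
  have hf2ca : ContinuousAt f2 α := hf2c.continuousAt (hU.mem_nhds hαU)
  set A : ℝ := f1 α with hAdef
  set B : ℝ := f2 α with hBdef
  have hA : A ≠ 0 := hd1
  have hB : B ≠ 0 := by rw [hBdef, ← hI2]; exact hd2
  have hAp : 0 < |A| := abs_pos.mpr hA
  have hBp : 0 < |B| := abs_pos.mpr hB
  set m : ℝ := |B / (2 * A)| with hmdef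
  have hm : 0 < m := abs_pos.mpr (div_ne_zero hB (by simpa using hA))
  -- choose ε
  obtain ⟨ε1, hε1p, hε1⟩ := Metric.continuousAt_iff.mp hf1ca (|A| / 2) (by positivity)
  obtain ⟨ε2, hε2p, hε2⟩ := Metric.continuousAt_iff.mp hf2ca (|B| / 2) (by positivity)
  set M : ℝ := 3 * |B| / |A| with hMdef
  have hMp : 0 < M := by positivity
  set ε : ℝ := min ε1 (min ε2 (min (δ / 2) (1 / (2 * M)))) with hεdef
  have hεp : 0 < ε := by
    refine lt_min hε1p (lt_min hε2p (lt_min (by linarith) (by positivity)))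
  have hεδ : ε ≤ δ / 2 := le_trans (min_le_right _ _) (le_trans (min_le_right _ _) (min_le_left _ _))
  have hεM : M * ε ≤ 1 / 2 := by
    have h1 : ε ≤ 1 / (2 * M) :=
      le_trans (min_le_right _ _) (le_trans (min_le_right _ _) (min_le_right _ _))
    calc M * ε ≤ M * (1 / (2 * M)) := by nlinarith
      _ = 1 / 2 := by
        field_simp
  have hball : ∀ t : ℝ, |t - α| < ε → t ∈ U := by
    intro t ht
    have := abs_lt.mp ht
    constructor <;> [linarith; linarith]
  have hf1b : ∀ t : ℝ, |t - α| < ε → |f1 t - A| < |A| / 2 := by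
    intro t ht
    have := hε1 (show dist t α < ε1 by rw [Real.dist_eq]; exact lt_of_lt_of_le ht (min_le_left _ _))
    rwa [Real.dist_eq] at this
  have hf2b : ∀ t : ℝ, |t - α| < ε → |f2 t - B| < |B| / 2 := by
    intro t ht
    have := hε2 (show dist t α < ε2 by
      rw [Real.dist_eq]
      exact lt_of_lt_of_le ht (le_trans (min_le_right _ _) (min_le_left _ _)))
    rwa [Real.dist_eq] at this
  have hf1ne : ∀ t : ℝ, |t - α| < ε → f1 t ≠ 0 := by
    intro t ht h0
    have := hf1b t ht
    rw [h0] at this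
    rw [abs_sub_comm, sub_zero] at this
    linarith
  have hf1lb : ∀ t : ℝ, |t - α| < ε → |A| / 2 ≤ |f1 t| := by
    intro t ht
    have h := hf1b t ht
    have := abs_sub_abs_le_abs_sub A (f1 t)
    rw [abs_sub_comm] at h
    linarith
  have hf2ub : ∀ t : ℝ, |t - α| < ε → |f2 t| ≤ 3 * |B| / 2 := by
    intro t ht
    have h := hf2b t ht
    have := abs_sub_abs_le_abs_sub (f2 t) B
    linarith
  have hbd : ∀ s t : ℝ, |s - α| < ε → |t - α| < ε → |f2 t / 2 / f1 s| ≤ M := by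
    intro s t hs ht
    have h1 := hf1lb s hs
    have h2 := hf2ub t ht
    have h3 : 0 < |f1 s| := lt_of_lt_of_le (by positivity) h1
    have h4 : 3 * |B| = M * |A| := by rw [hMdef]; field_simp
    rw [abs_div, abs_div, abs_two, div_div, div_le_iff₀ (by positivity)]
    nlinarith [hMp, hAp]
  -- derivatives available on hull Iccs inside the ball
  have hderiv1 : ∀ r : ℝ, r < ε → ∀ t ∈ Set.Icc (α - r) (α + r), HasDerivAt f (f1 t) t := by
    intro r hr t ht
    refine hdf t (hball t ?_)
    rw [abs_lt]; constructor <;> [linarith [ht.1]; linarith [ht.2]]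
  have hderiv2 : ∀ r : ℝ, r < ε → ∀ t ∈ Set.Icc (α - r) (α + r), HasDerivAt f1 (f2 t) t := by
    intro r hr t ht
    refine hdf1 t (hball t ?_)
    rw [abs_lt]; constructor <;> [linarith [ht.1]; linarith [ht.2]]
  -- nonvanishing of f off α inside the ball
  have hfne0 : ∀ p : ℝ, |p - α| < ε → p ≠ α → f p ≠ 0 := by
    intro p hp hpα
    have hmem : p ∈ Set.Icc (α - |p - α|) (α + |p - α|) := by
      have := abs_le.mp (le_refl |p - α|)
      constructor <;> linarith [this.1, this.2]
    have hαmem : α ∈ Set.Icc (α - |p - α|) (α + |p - α|) := by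
      have := abs_nonneg (p - α)
      constructor <;> linarith
    obtain ⟨ξ, hξmem, hξ⟩ := mvt_sym f f1 p α (α - |p - α|) (α + |p - α|) hpα hmem hαmem
      (hderiv1 |p - α| hp)
    have hξε : |ξ - α| < ε := by
      rw [abs_lt]; constructor <;> [linarith [hξmem.1]; linarith [hξmem.2]]
    rw [hroot, sub_zero] at hξ
    rw [hξ]
    exact mul_ne_zero (hf1ne ξ hξε) (sub_ne_zero.mpr hpα)
  -- the key one-step analysis
  have step : ∀ p q : ℝ, |p - α| < ε → |q - α| < ε → p ≠ q → p ≠ α → q ≠ α →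
      ∃ ξ η : ℝ, |ξ - α| ≤ max |p - α| |q - α| ∧ |η - α| ≤ max |p - α| |q - α| ∧
        f p - f q = f1 ξ * (p - q) ∧ f1 ξ ≠ 0 ∧
        p - f p * (p - q) / (f p - f q) - α = (p - α) * (q - α) * (f2 η / 2 / f1 ξ) := by
    intro p q hp hq hpq hpα hqα
    set r : ℝ := max |p - α| |q - α| with hrdef
    have hr0 : 0 ≤ r := le_trans (abs_nonneg _) (le_max_left _ _)
    have hrε : r < ε := max_lt hp hq
    have hpm : p ∈ Set.Icc (α - r) (α + r) := by
      have := abs_le.mp (le_max_left |p - α| |q - α|)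
      constructor <;> linarith [this.1, this.2]
    have hqm : q ∈ Set.Icc (α - r) (α + r) := by
      have := abs_le.mp (le_max_right |p - α| |q - α|)
      constructor <;> linarith [this.1, this.2]
    have hαm : α ∈ Set.Icc (α - r) (α + r) := by constructor <;> linarith
    obtain ⟨ξ, hξmem, hξ⟩ := mvt_sym f f1 p q (α - r) (α + r) hpq hpm hqm (hderiv1 r hrε)
    obtain ⟨η, hηmem, hη⟩ := dd_sym f f1 f2 p q α (α - r) (α + r) hpq hpα hqα hpm hqm hαm
      (hderiv1 r hrε) (hderiv2 r hrε)
    have hξr : |ξ - α| ≤ r := by rw [abs_le]; constructor <;> linarith [hξmem.1, hξmem.2]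
    have hηr : |η - α| ≤ r := by rw [abs_le]; constructor <;> linarith [hηmem.1, hηmem.2]
    have hξne : f1 ξ ≠ 0 := hf1ne ξ (lt_of_le_of_lt hξr hrε)
    refine ⟨ξ, η, hξr, hηr, hξ, hξne, ?_⟩
    have hpq' : p - q ≠ 0 := sub_ne_zero.mpr hpq
    have hqp' : q - p ≠ 0 := sub_ne_zero.mpr (Ne.symm hpq)
    have hpα' : p - α ≠ 0 := sub_ne_zero.mpr hpα
    have hαp' : α - p ≠ 0 := sub_ne_zero.mpr (Ne.symm hpα)
    have hqα' : q - α ≠ 0 := sub_ne_zero.mpr hqα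
    have hαq' : α - q ≠ 0 := sub_ne_zero.mpr (Ne.symm hqα)
    have hfpq : f p - f q ≠ 0 := by rw [hξ]; exact mul_ne_zero hξne hpq'
    have hη2 : f2 η / 2 = f p / ((p - q) * (p - α)) + f q / ((q - p) * (q - α)) := by
      rw [hη, hroot]; ring
    have hξ2 : f1 ξ = (f p - f q) / (p - q) := (eq_div_iff hpq').mpr hξ.symm
    rw [hη2, hξ2]
    field_simp
    ring
  -- main argument
  refine ⟨ε, hεp, fun x hx0 hx1 hx01 hxα hrec => ?_⟩
  set E : ℕ → ℝ := fun n => |x n - α| with hEdef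
  have hEpos : ∀ n, 0 < E n := fun n => abs_pos.mpr (sub_ne_zero.mpr (hxα n))
  have inv : ∀ n, E n < ε ∧ E (n + 1) < ε ∧ x (n + 1) ≠ x n := by
    intro n
    induction n with
    | zero => exact ⟨hx0, hx1, Ne.symm hx01⟩
    | succ n ih =>
      obtain ⟨h0, h1, hne⟩ := ih
      obtain ⟨ξ, η, hξr, hηr, hslope, hξne, hid⟩ :=
        step (x (n + 1)) (x n) h1 h0 hne (hxα _) (hxα _)
      have hfe : f (x (n + 1)) - f (x n) ≠ 0 := by
        rw [hslope]; exact mul_ne_zero hξne (sub_ne_zero.mpr hne)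
      have hx2 : x (n + 2) - α = (x (n + 1) - α) * (x n - α) * (f2 η / 2 / f1 ξ) := by
        rw [hrec n]; exact hid
      have hE2 : E (n + 2) = E (n + 1) * E n * |f2 η / 2 / f1 ξ| := by
        show |x (n + 2) - α| = _
        rw [hx2, abs_mul, abs_mul]
      have hmax : max |x (n + 1) - α| |x n - α| < ε := max_lt h1 h0
      have hbd' : |f2 η / 2 / f1 ξ| ≤ M :=
        hbd ξ η (lt_of_le_of_lt hξr hmax) (lt_of_le_of_lt hηr hmax)
      have hE2lt : E (n + 2) < ε := by
        have k1 : E (n + 2) ≤ E (n + 1) * E n * M := by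
          rw [hE2]
          exact mul_le_mul_of_nonneg_left hbd' (by positivity)
        have k2 : E n * M ≤ ε * M := mul_le_mul_of_nonneg_right h0.le hMp.le
        have k2' : E n * M ≤ 1 / 2 := by nlinarith [hεM]
        have k3 : E (n + 1) * (E n * M) ≤ E (n + 1) * (1 / 2) :=
          mul_le_mul_of_nonneg_left k2' (hEpos (n + 1)).le
        nlinarith [hEpos (n + 1)]
      have hxne : x (n + 2) ≠ x (n + 1) := by
        rw [hrec n]
        intro hcon
        have h0' : f (x (n + 1)) * (x (n + 1) - x n) / (f (x (n + 1)) - f (x n)) = 0 :=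
          sub_eq_self.mp hcon
        have : f (x (n + 1)) * (x (n + 1) - x n) = 0 :=
          (div_eq_zero_iff.mp h0').resolve_right hfe
        rcases mul_eq_zero.mp this with h | h
        · exact hfne0 (x (n + 1)) h1 (hxα _) h
        · exact hne (sub_eq_zero.mp h)
      exact ⟨h1, hE2lt, hxne⟩
  -- choose per-step ξ η
  have main : ∀ n, ∃ ξ η : ℝ, |ξ - α| ≤ max (E (n + 1)) (E n) ∧
      |η - α| ≤ max (E (n + 1)) (E n) ∧
      f (x (n + 1)) - f (x n) = f1 ξ * (x (n + 1) - x n) ∧ f1 ξ ≠ 0 ∧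
      x (n + 2) - α = (x (n + 1) - α) * (x n - α) * (f2 η / 2 / f1 ξ) := by
    intro n
    obtain ⟨h0, h1, hne⟩ := inv n
    obtain ⟨ξ, η, hξr, hηr, hslope, hξne, hid⟩ :=
      step (x (n + 1)) (x n) h1 h0 hne (hxα _) (hxα _)
    exact ⟨ξ, η, hξr, hηr, hslope, hξne, by rw [hrec n]; exact hid⟩
  choose ξ η hξr hηr hslope hξne hid using main
  have hfeq : ∀ n, f (x (n + 1)) ≠ f (x n) := by
    intro n
    have := mul_ne_zero (hξne n) (sub_ne_zero.mpr (inv n).2.2)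
    rw [← hslope n] at this
    exact sub_ne_zero.mp this
  have hmaxlt : ∀ n, max (E (n + 1)) (E n) < ε := fun n => max_lt (inv n).2.1 (inv n).1
  set c : ℕ → ℝ := fun n => |f2 (η n) / 2 / f1 (ξ n)| with hcdef
  have hErel : ∀ n, E (n + 2) = E (n + 1) * E n * c n := by
    intro n
    show |x (n + 2) - α| = _
    rw [hid n, abs_mul, abs_mul]
  have hcbd : ∀ n, c n ≤ M := fun n =>
    hbd (ξ n) (η n) (lt_of_le_of_lt (hξr n) (hmaxlt n)) (lt_of_le_of_lt (hηr n) (hmaxlt n))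
  have hcpos : ∀ n, 0 < c n := by
    intro n
    have h := hEpos (n + 2)
    rw [hErel n] at h
    have hc0 : c n ≠ 0 := by
      intro h0
      rw [h0, mul_zero] at h
      exact lt_irrefl 0 h
    exact lt_of_le_of_ne (abs_nonneg _) (Ne.symm hc0)
  -- decay and convergence
  have hdec : ∀ n, E (n + 2) ≤ E (n + 1) / 2 := by
    intro n
    have h3 := (inv n).1
    have k1 : E (n + 1) * E n * c n ≤ E (n + 1) * E n * M :=
      mul_le_mul_of_nonneg_left (hcbd n) (by positivity)
    have k2 : E n * M ≤ ε * M := mul_le_mul_of_nonneg_right h3.le hMp.le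
    have k2' : E n * M ≤ 1 / 2 := by nlinarith [hεM]
    have k3 : E (n + 1) * (E n * M) ≤ E (n + 1) * (1 / 2) :=
      mul_le_mul_of_nonneg_left k2' (hEpos (n + 1)).le
    rw [hErel n]
    nlinarith
  have hgeo : ∀ k, E (k + 1) ≤ (1 / 2 : ℝ) ^ k * E 1 := by
    intro k
    induction k with
    | zero => simp
    | succ k ih =>
      calc E (k + 2) ≤ E (k + 1) / 2 := hdec k
        _ ≤ ((1 / 2 : ℝ) ^ k * E 1) / 2 := by linarith
        _ = (1 / 2 : ℝ) ^ (k + 1) * E 1 := by ring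
  have hgeo0 : Tendsto (fun k => (1 / 2 : ℝ) ^ k * E 1) atTop (𝓝 0) := by
    simpa using (tendsto_pow_atTop_nhds_zero_of_lt_one (by norm_num) (by norm_num : (1/2:ℝ) < 1)).mul_const (E 1)
  have hEshift : Tendsto (fun k => E (k + 1)) atTop (𝓝 0) :=
    squeeze_zero (fun k => (hEpos (k + 1)).le) hgeo hgeo0
  have hE0 : Tendsto E atTop (𝓝 0) := (tendsto_add_atTop_iff_nat 1).mp hEshift
  have hxlim : Tendsto x atTop (𝓝 α) := by
    rw [tendsto_iff_dist_tendsto_zero]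
    simpa [Real.dist_eq] using hE0
  -- ξ η → α
  have hmax0 : Tendsto (fun n => max (E (n + 1)) (E n)) atTop (𝓝 0) := by
    have := hEshift.max hE0
    simpa using this
  have hξlim : Tendsto ξ atTop (𝓝 α) := by
    rw [tendsto_iff_dist_tendsto_zero]
    simp only [Real.dist_eq]
    exact squeeze_zero (fun n => abs_nonneg _) hξr hmax0
  have hηlim : Tendsto η atTop (𝓝 α) := by
    rw [tendsto_iff_dist_tendsto_zero]
    simp only [Real.dist_eq]
    exact squeeze_zero (fun n => abs_nonneg _) hηr hmax0
  -- c → m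
  have hclim : Tendsto c atTop (𝓝 m) := by
    have h1 : Tendsto (fun n => f1 (ξ n)) atTop (𝓝 A) := hf1ca.tendsto.comp hξlim
    have h2 : Tendsto (fun n => f2 (η n)) atTop (𝓝 B) := hf2ca.tendsto.comp hηlim
    have h3 : Tendsto (fun n => f2 (η n) / 2 / f1 (ξ n)) atTop (𝓝 (B / 2 / A)) :=
      (h2.div_const 2).div h1 hA
    have := h3.abs
    have heq : |B / 2 / A| = m := by rw [hmdef, div_div]
    rwa [heq] at this
  -- log recurrence
  set u : ℕ → ℝ := fun n => Real.log (E (n + 1)) - φ * Real.log (E n) - (φ - 1) * Real.log m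
    with hudef
  set a : ℕ → ℝ := fun n => Real.log (c n) - Real.log m with hadef
  have hu : ∀ n, u (n + 1) = a n - (φ - 1) * u n := by
    intro n
    have hlog : Real.log (E (n + 2)) =
        Real.log (E (n + 1)) + Real.log (E n) + Real.log (c n) := by
      rw [hErel n, Real.log_mul (mul_pos (hEpos (n + 1)) (hEpos n)).ne' (hcpos n).ne',
        Real.log_mul (hEpos (n + 1)).ne' (hEpos n).ne']
    show Real.log (E (n + 2)) - φ * Real.log (E (n + 1)) - (φ - 1) * Real.log m =
      (Real.log (c n) - Real.log m) - (φ - 1) *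
        (Real.log (E (n + 1)) - φ * Real.log (E n) - (φ - 1) * Real.log m)
    linear_combination hlog - (Real.log (E n) + Real.log m) * hφ2
  have ha0 : Tendsto a atTop (𝓝 0) := by
    have : Tendsto (fun n => Real.log (c n)) atTop (𝓝 (Real.log m)) :=
      (Real.continuousAt_log hm.ne').tendsto.comp hclim
    simpa using this.sub_const (Real.log m)
  have hu0 : Tendsto u atTop (𝓝 0) := contraction_tendsto u a (φ - 1) hr1 ha0 hu
  -- final limit
  have hmeq : |iteratedDeriv 2 f α / (2 * deriv f α)| = m := by rw [hI2, hmdef]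
  have hfun : ∀ n, E (n + 1) / E n ^ φ = Real.exp (u n) * m ^ (φ - 1) := by
    intro n
    rw [Real.rpow_def_of_pos (hEpos n), Real.rpow_def_of_pos hm, ← Real.exp_add]
    have h1 : u n + Real.log m * (φ - 1) = Real.log (E (n + 1)) - Real.log (E n) * φ := by
      show (Real.log (E (n + 1)) - φ * Real.log (E n) - (φ - 1) * Real.log m) +
        Real.log m * (φ - 1) = _
      ring
    rw [h1, Real.exp_sub, Real.exp_log (hEpos (n + 1))]
  have hexp : Tendsto (fun n => Real.exp (u n) * m ^ (φ - 1)) atTop (𝓝 (m ^ (φ - 1))) := by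
    have : Tendsto (fun n => Real.exp (u n)) atTop (𝓝 1) := by
      have := Real.continuous_exp.continuousAt.tendsto.comp hu0
      rw [Real.exp_zero] at this
      exact this
    simpa using this.mul_const (m ^ (φ - 1))
  refine ⟨hfeq, fun n => (inv n).1, hxlim, ?_⟩
  rw [hmeq]
  have : (fun n => E (n + 1) / E n ^ φ) = fun n => Real.exp (u n) * m ^ (φ - 1) :=
    funext hfun
  show Tendsto (fun n => E (n + 1) / E n ^ φ) atTop (𝓝 (m ^ (φ - 1)))
  rw [this]
  exact hexp
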